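/- For every finite simple graph G, the vertex cover number satisfies OPT(G) ≥ 2·LP(G) − MM(G). -/

import Mathlib

open scoped Classical

/-- A fractional vertex cover of `G`. -/
def IsFVC {V : Type} (G : SimpleGraph V) (x : V → ℝ) : Prop :=
  (∀ v, 0 ≤ x v ∧ x v ≤ 1) ∧ ∀ ⦃u v⦄, G.Adj u v → 1 ≤ x u + x v

/-- The weight of a fractional vertex cover. -/
noncomputable def fvcWeight {V : Type} [Fintype V] (x : V → ℝ) : ℝ := ∑ v, x v

/-- `LP(G)`: the minimum weight of a fractional vertex cover of `G`. -/
noncomputable def LPopt {V : Type} [Fintype V] (G : SimpleGraph V) : ℝ :=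
  sInf {w : ℝ | ∃ x : V → ℝ, IsFVC G x ∧ w = fvcWeight x}

/-- A matching of `G`: a set of pairwise vertex-disjoint edges of `G`. -/
def IsMatchingSet {V : Type} (G : SimpleGraph V) (M : Finset (Sym2 V)) : Prop :=
  (∀ e ∈ M, e ∈ G.edgeSet) ∧ ∀ e ∈ M, ∀ f ∈ M, e ≠ f → ∀ v : V, v ∈ e → v ∉ f

/-- `MM(G)`: the maximum size of a matching of `G`. -/
noncomputable def MMnum {V : Type} (G : SimpleGraph V) : ℕ :=
  sSup {n : ℕ | ∃ M : Finset (Sym2 V), IsMatchingSet G M ∧ M.card = n}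

/-- `OPT(G)`: the minimum size of a vertex cover of `G`. -/
noncomputable def VCnum {V : Type} (G : SimpleGraph V) : ℕ :=
  sInf {n : ℕ | ∃ S : Finset V, (∀ ⦃u v⦄, G.Adj u v → u ∈ S ∨ v ∈ S) ∧ S.card = n}

/-- `N(X)`: the set of vertices outside `X` having a neighbour in `X`. -/
def nbhd {V : Type} (G : SimpleGraph V) (X : Set V) : Set V :=
  {v | v ∉ X ∧ ∃ u ∈ X, G.Adj u v}

/-- `X` is an independent set in `G`. -/
def IndepSet {V : Type} (G : SimpleGraph V) (X : Set V) : Prop :=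
  ∀ u ∈ X, ∀ v ∈ X, ¬ G.Adj u v

/-- `surplus(G) ≥ s`: every nonempty independent set `X` satisfies `|N(X)| ≥ |X| + s`. -/
def SurplusGE {V : Type} (G : SimpleGraph V) (s : ℕ) : Prop :=
  ∀ X : Set V, X.Nonempty → IndepSet G X → X.ncard + s ≤ (nbhd G X).ncard

/-- The matching `M` saturates the vertex `v`. -/
def Saturates {V : Type} (M : Finset (Sym2 V)) (v : V) : Prop := ∃ e ∈ M, v ∈ e

/-- `O(G)`: vertices left unsaturated by some maximum matching of `G`. -/
def OSet {V : Type} (G : SimpleGraph V) : Set V :=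
  {v | ∃ M : Finset (Sym2 V), IsMatchingSet G M ∧ M.card = MMnum G ∧ ¬ Saturates M v}

/-- `I(G)`: vertices outside `O(G)` having a neighbour in `O(G)`. -/
def ISet {V : Type} (G : SimpleGraph V) : Set V := nbhd G (OSet G)

/-- `P(G)`: the remaining vertices. -/
def GEPSet {V : Type} (G : SimpleGraph V) : Set V := (OSet G ∪ ISet G)ᶜ


open Finset

private lemma fvc_exists_min {V : Type} [Fintype V] (G : SimpleGraph V) :
    ∃ x₀ : V → ℝ, IsFVC G x₀ ∧ ∀ x, IsFVC G x → fvcWeight x₀ ≤ fvcWeight x := by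
  have hne : Set.Nonempty {x : V → ℝ | IsFVC G x} :=
    ⟨fun _ => 1, ⟨fun v => by norm_num, fun u v _ => by norm_num⟩⟩
  have hsub : {x : V → ℝ | IsFVC G x} ⊆ Set.univ.pi fun _ : V => Set.Icc (0:ℝ) 1 := by
    intro x hx v _
    exact ⟨(hx.1 v).1, (hx.1 v).2⟩
  have hclosed : IsClosed {x : V → ℝ | IsFVC G x} := by
    have h1 : {x : V → ℝ | IsFVC G x} =
        (⋂ v : V, (fun x : V → ℝ => x v) ⁻¹' Set.Icc (0:ℝ) 1) ∩
        ⋂ (u : V) (v : V) (_ : G.Adj u v), {x : V → ℝ | 1 ≤ x u + x v} := by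
      ext x
      simp only [Set.mem_setOf_eq, Set.mem_inter_iff, Set.mem_iInter, Set.mem_preimage,
        Set.mem_Icc, IsFVC]
    rw [h1]
    refine IsClosed.inter (isClosed_iInter fun v => isClosed_Icc.preimage (continuous_apply v))
      (isClosed_iInter fun u => isClosed_iInter fun v => isClosed_iInter fun _ => ?_)
    exact isClosed_le continuous_const ((continuous_apply u).add (continuous_apply v))
  have hcpt : IsCompact {x : V → ℝ | IsFVC G x} :=
    (isCompact_univ_pi fun _ : V => isCompact_Icc).of_isClosed_subset hclosed hsub
  obtain ⟨x₀, hx₀, hmin⟩ := hcpt.exists_isMinOn hne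
    ((continuous_finset_sum _ fun v _ => continuous_apply v).continuousOn :
      ContinuousOn (fun x : V → ℝ => ∑ v, x v) _)
  exact ⟨x₀, hx₀, fun x hx => isMinOn_iff.mp hmin x hx⟩

private lemma LPopt_le {V : Type} [Fintype V] (G : SimpleGraph V) {y : V → ℝ}
    (hy : IsFVC G y) : LPopt G ≤ fvcWeight y :=
  csInf_le ⟨0, by rintro w ⟨x, hx, rfl⟩; exact Finset.sum_nonneg fun v _ => (hx.1 v).1⟩
    ⟨y, hy, rfl⟩

private lemma le_MMnum {V : Type} [Fintype V] (G : SimpleGraph V) {M : Finset (Sym2 V)}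
    (hM : IsMatchingSet G M) : M.card ≤ MMnum G :=
  le_csSup ⟨Fintype.card (Sym2 V), by rintro n ⟨M', _, rfl⟩; exact M'.card_le_univ⟩
    ⟨M, hM, rfl⟩

private lemma VCnum_attained {V : Type} [Fintype V] (G : SimpleGraph V) :
    ∃ T : Finset V, (∀ ⦃u v⦄, G.Adj u v → u ∈ T ∨ v ∈ T) ∧ T.card = VCnum G := by
  have h : VCnum G ∈ {n : ℕ | ∃ S : Finset V,
      (∀ ⦃u v⦄, G.Adj u v → u ∈ S ∨ v ∈ S) ∧ S.card = n} :=
    Nat.sInf_mem ⟨Fintype.card V, Finset.univ, fun u v _ => Or.inl (mem_univ u), by simp⟩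
  obtain ⟨T, hT, hc⟩ := h
  exact ⟨T, hT, hc⟩

private lemma matching_of_inj {V : Type} (G : SimpleGraph V) (P Q : Finset V)
    (hPQ : ∀ v ∈ P, v ∉ Q) (f : {v // v ∈ P} → V) (hinj : Function.Injective f)
    (hadj : ∀ v, G.Adj v.1 (f v)) (hfQ : ∀ v, f v ∈ Q) :
    ∃ M : Finset (Sym2 V), IsMatchingSet G M ∧ M.card = P.card ∧
      ∀ e ∈ M, ∀ v, v ∈ e → v ∈ P ∪ Q := by
  refine ⟨P.attach.image (fun v => s(v.1, f v)), ⟨?_, ?_⟩, ?_, ?_⟩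
  · intro e he
    obtain ⟨a, _, rfl⟩ := mem_image.mp he
    exact hadj a
  · intro e he e' he' hne v hv hv'
    obtain ⟨a, _, rfl⟩ := mem_image.mp he
    obtain ⟨b, _, rfl⟩ := mem_image.mp he'
    rcases Sym2.mem_iff.mp hv with rfl | rfl
    · rcases Sym2.mem_iff.mp hv' with h | h
      · exact hne (by rw [Subtype.ext h])
      · exact hPQ a.1 a.2 (h ▸ hfQ b)
    · rcases Sym2.mem_iff.mp hv' with h | h
      · exact hPQ b.1 b.2 (h.symm ▸ hfQ a)
      · exact hne (by rw [hinj h])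
  · rw [Finset.card_image_of_injective _ ?_, Finset.card_attach]
    intro a b hab
    rcases Sym2.eq_iff.mp hab with ⟨h1, _⟩ | ⟨h1, h2⟩
    · exact Subtype.ext h1
    · exact absurd (h1 ▸ hfQ b) (hPQ a.1 a.2)
  · intro e he v hv
    obtain ⟨a, _, rfl⟩ := mem_image.mp he
    rcases Sym2.mem_iff.mp hv with rfl | rfl
    · exact mem_union_left _ a.2
    · exact mem_union_right _ (hfQ a)

private lemma matching_union {V : Type} (G : SimpleGraph V) {M1 M2 : Finset (Sym2 V)}
    (h1 : IsMatchingSet G M1) (h2 : IsMatchingSet G M2)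
    (hd : ∀ e ∈ M1, ∀ e' ∈ M2, ∀ v : V, v ∈ e → v ∉ e') :
    IsMatchingSet G (M1 ∪ M2) ∧ (M1 ∪ M2).card = M1.card + M2.card := by
  have hdisj : Disjoint M1 M2 := by
    rw [Finset.disjoint_left]
    intro e he1 he2
    induction e using Sym2.ind with
    | _ a b => exact hd _ he1 _ he2 a (Sym2.mem_mk_left a b) (Sym2.mem_mk_left a b)
  constructor
  · constructor
    · intro e he
      rcases mem_union.mp he with h | h
      · exact h1.1 e h
      · exact h2.1 e h
    · intro e he e' he' hne v hv
      rcases mem_union.mp he with h | h <;> rcases mem_union.mp he' with h' | h'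
      · exact h1.2 e h e' h' hne v hv
      · exact hd e h e' h' v hv
      · intro hv'; exact hd e' h' e h v hv' hv
      · exact h2.2 e h e' h' hne v hv
  · exact Finset.card_union_of_disjoint hdisj

private lemma pert_card_le {V : Type} [Fintype V] (G : SimpleGraph V) (x₀ : V → ℝ)
    (hmin : ∀ x, IsFVC G x → fvcWeight x₀ ≤ fvcWeight x)
    (Y B : Finset V) (hd : ∀ v ∈ Y, v ∉ B) (ε : ℝ) (hε : 0 < ε)
    (hfvc : IsFVC G (fun v => if v ∈ Y then x₀ v - ε else if v ∈ B then x₀ v + ε else x₀ v)) :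
    Y.card ≤ B.card := by
  have h := hmin _ hfvc
  have hw : fvcWeight (fun v => if v ∈ Y then x₀ v - ε else if v ∈ B then x₀ v + ε else x₀ v)
      = fvcWeight x₀ - ε * Y.card + ε * B.card := by
    unfold fvcWeight
    have hpt : ∀ v : V, (if v ∈ Y then x₀ v - ε else if v ∈ B then x₀ v + ε else x₀ v)
        = x₀ v + ((if v ∈ Y then -ε else 0) + (if v ∈ B then ε else 0)) := by
      intro v
      by_cases h1 : v ∈ Y
      · simp [h1, hd v h1]; ring
      · by_cases h2 : v ∈ B <;> simp [h1, h2]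
    simp only [hpt, Finset.sum_add_distrib]
    rw [Finset.sum_ite_mem, Finset.sum_ite_mem, Finset.univ_inter, Finset.univ_inter,
      Finset.sum_const, Finset.sum_const]
    simp only [nsmul_eq_mul]
    ring
  rw [hw] at h
  have h2 : (Y.card : ℝ) ≤ (B.card : ℝ) := by nlinarith
  exact_mod_cast h2

/-- For every finite simple graph `G`, `OPT(G) ≥ 2·LP(G) − MM(G)`. -/
theorem vc_ge_two_lp_sub_mm {V : Type} [Fintype V] (G : SimpleGraph V) :
    2 * LPopt G - (MMnum G : ℝ) ≤ (VCnum G : ℝ) := by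
  classical
  obtain ⟨x₀, hx₀, hmin⟩ := fvc_exists_min G
  obtain ⟨T, hT, hTcard⟩ := VCnum_attained G
  set A1 : Finset V := univ.filter (fun v => (1:ℝ)/2 < x₀ v) with hA1def
  set Ah : Finset V := univ.filter (fun v => x₀ v = 1/2) with hAhdef
  set A0 : Finset V := univ.filter (fun v => x₀ v < 1/2) with hA0def
  have hmemA1 : ∀ v, v ∈ A1 ↔ 1/2 < x₀ v := fun v => by simp [hA1def]
  have hmemAh : ∀ v, v ∈ Ah ↔ x₀ v = 1/2 := fun v => by simp [hAhdef]
  have hmemA0 : ∀ v, v ∈ A0 ↔ x₀ v < 1/2 := fun v => by simp [hA0def]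
  -- the uniform perturbation amount
  have hne' : (insert ((1:ℝ)/2) (A1.image fun u => x₀ u - 1/2)).Nonempty :=
    insert_nonempty _ _
  set ε : ℝ := (insert ((1:ℝ)/2) (A1.image fun u => x₀ u - 1/2)).min' hne' with hεdef
  have hε_pos : 0 < ε := by
    rw [hεdef]
    apply (Finset.lt_min'_iff _ _).mpr
    intro b hb
    rcases mem_insert.mp hb with rfl | hb
    · norm_num
    · obtain ⟨u, hu, rfl⟩ := mem_image.mp hb
      have := (hmemA1 u).mp hu
      linarith
  have hε_half : ε ≤ 1/2 := min'_le _ _ (mem_insert_self _ _)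
  have hε_A1 : ∀ u ∈ A1, ε ≤ x₀ u - 1/2 := fun u hu =>
    min'_le _ _ (mem_insert_of_mem (mem_image_of_mem _ hu))
  -- Hall condition between A1 and A0
  have hHall1 : ∀ s : Finset {v // v ∈ A1},
      s.card ≤ (s.biUnion fun v => A0.filter (G.Adj v.1)).card := by
    intro s
    set Y : Finset V := s.image Subtype.val with hYdef
    set B : Finset V := s.biUnion (fun v => A0.filter (G.Adj v.1)) with hBdef
    have hYcard : Y.card = s.card := card_image_of_injective _ Subtype.val_injective
    have hYsub : ∀ v ∈ Y, v ∈ A1 := by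
      intro v hv; obtain ⟨a, _, rfl⟩ := mem_image.mp hv; exact a.2
    have hBsub : ∀ v ∈ B, v ∈ A0 := by
      intro v hv; obtain ⟨a, _, hv2⟩ := mem_biUnion.mp hv; exact (mem_filter.mp hv2).1
    have hYB : ∀ v ∈ Y, v ∉ B := by
      intro v hv hvB
      have h1 := (hmemA1 v).mp (hYsub v hv)
      have h2 := (hmemA0 v).mp (hBsub v hvB)
      linarith
    rw [← hYcard]
    apply pert_card_le G x₀ hmin Y B hYB ε hε_pos
    constructor
    · intro v
      by_cases h1 : v ∈ Y
      · have h2 := hε_A1 v (hYsub v h1)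
        have h3 := hx₀.1 v
        simp only [if_pos h1]
        constructor <;> linarith
      · by_cases h2 : v ∈ B
        · have h3 := (hmemA0 v).mp (hBsub v h2)
          have h4 := hx₀.1 v
          simp only [if_neg h1, if_pos h2]
          constructor <;> linarith
        · simp only [if_neg h1, if_neg h2]
          exact hx₀.1 v
    · have key : ∀ u v, G.Adj u v → u ∈ Y →
          1 ≤ (if u ∈ Y then x₀ u - ε else if u ∈ B then x₀ u + ε else x₀ u)
            + (if v ∈ Y then x₀ v - ε else if v ∈ B then x₀ v + ε else x₀ v) := by
        intro u v hadj hu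
        have hεu := hε_A1 u (hYsub u hu)
        rw [if_pos hu]
        by_cases hv : v ∈ Y
        · rw [if_pos hv]
          have h5 := hε_A1 v (hYsub v hv)
          linarith
        · rw [if_neg hv]
          by_cases hvB : v ∈ B
          · rw [if_pos hvB]
            have h6 := hx₀.2 hadj
            linarith
          · rw [if_neg hvB]
            have hv12 : 1/2 ≤ x₀ v := by
              by_contra hlt
              push_neg at hlt
              apply hvB
              obtain ⟨a, ha, hav⟩ := mem_image.mp hu
              rw [hBdef]
              exact mem_biUnion.mpr
                ⟨a, ha, mem_filter.mpr ⟨(hmemA0 v).mpr hlt, hav ▸ hadj⟩⟩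
            linarith
      intro u v hadj
      simp only []
      by_cases hu : u ∈ Y
      · exact key u v hadj hu
      · by_cases hv : v ∈ Y
        · have h7 := key v u hadj.symm hv
          linarith
        · have h8 : x₀ u ≤ (if u ∈ Y then x₀ u - ε else if u ∈ B then x₀ u + ε else x₀ u) := by
            rw [if_neg hu]
            by_cases h : u ∈ B
            · rw [if_pos h]; linarith
            · rw [if_neg h]
          have h9 : x₀ v ≤ (if v ∈ Y then x₀ v - ε else if v ∈ B then x₀ v + ε else x₀ v) := by
            rw [if_neg hv]
            by_cases h : v ∈ B
            · rw [if_pos h]; linarith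
            · rw [if_neg h]
          have h10 := hx₀.2 hadj
          linarith
  obtain ⟨f, hfinj, hfmem⟩ :=
    (Finset.all_card_le_biUnion_card_iff_exists_injective
      (fun v : {v // v ∈ A1} => A0.filter (G.Adj v.1))).mp hHall1
  -- the unsaturated part of Ah (relative to the minimum cover T)
  set Istar : Finset V := Ah \ T with hIdef
  -- Hall condition between Istar and Ah
  have hHall2 : ∀ s : Finset {v // v ∈ Istar},
      s.card ≤ (s.biUnion fun v => Ah.filter (G.Adj v.1)).card := by
    intro s
    set X : Finset V := s.image Subtype.val with hXdef
    set B : Finset V := s.biUnion (fun v => Ah.filter (G.Adj v.1)) with hBdef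
    have hXcard : X.card = s.card := card_image_of_injective _ Subtype.val_injective
    have hXsub : ∀ v ∈ X, v ∈ Istar := by
      intro v hv; obtain ⟨a, _, rfl⟩ := mem_image.mp hv; exact a.2
    have hXAh : ∀ v ∈ X, x₀ v = 1/2 := fun v hv =>
      (hmemAh v).mp (mem_sdiff.mp (hXsub v hv)).1
    have hXindep : ∀ u ∈ X, ∀ v ∈ X, ¬ G.Adj u v := by
      intro u hu v hv hadj
      rcases hT hadj with h | h
      · exact (mem_sdiff.mp (hXsub u hu)).2 h
      · exact (mem_sdiff.mp (hXsub v hv)).2 h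
    have hBsub : ∀ v ∈ B, v ∈ Ah := by
      intro v hv; obtain ⟨a, _, hv2⟩ := mem_biUnion.mp hv; exact (mem_filter.mp hv2).1
    have hXB : ∀ v ∈ X, v ∉ B := by
      intro v hv hvB
      obtain ⟨a, ha, hv2⟩ := mem_biUnion.mp hvB
      exact hXindep a.1 (mem_image.mpr ⟨a, ha, rfl⟩) v hv (mem_filter.mp hv2).2
    rw [← hXcard]
    apply pert_card_le G x₀ hmin X B hXB ε hε_pos
    constructor
    · intro v
      by_cases h1 : v ∈ X
      · have h2 := hXAh v h1
        simp only [if_pos h1]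
        constructor <;> linarith
      · by_cases h2 : v ∈ B
        · have h3 := (hmemAh v).mp (hBsub v h2)
          simp only [if_neg h1, if_pos h2]
          constructor <;> linarith
        · simp only [if_neg h1, if_neg h2]
          exact hx₀.1 v
    · have key : ∀ u v, G.Adj u v → u ∈ X →
          1 ≤ (if u ∈ X then x₀ u - ε else if u ∈ B then x₀ u + ε else x₀ u)
            + (if v ∈ X then x₀ v - ε else if v ∈ B then x₀ v + ε else x₀ v) := by
        intro u v hadj hu
        have hu12 := hXAh u hu
        rw [if_pos hu]
        by_cases hv : v ∈ X
        · exact absurd hadj (hXindep u hu v hv)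
        · rw [if_neg hv]
          by_cases hvB : v ∈ B
          · rw [if_pos hvB]
            have h3 := (hmemAh v).mp (hBsub v hvB)
            linarith
          · rw [if_neg hvB]
            -- v is not a half vertex adjacent to X, not < 1/2 by feasibility, so v ∈ A1
            have hfeas := hx₀.2 hadj
            have hvne : x₀ v ≠ 1/2 := by
              intro hveq
              apply hvB
              obtain ⟨a, ha, hav⟩ := mem_image.mp hu
              rw [hBdef]
              exact mem_biUnion.mpr
                ⟨a, ha, mem_filter.mpr ⟨(hmemAh v).mpr hveq, hav ▸ hadj⟩⟩
            have hvgt : 1/2 < x₀ v := by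
              rcases lt_trichotomy (x₀ v) (1/2) with h | h | h
              · linarith
              · exact absurd h hvne
              · exact h
            have h5 := hε_A1 v ((hmemA1 v).mpr hvgt)
            linarith
      intro u v hadj
      simp only []
      by_cases hu : u ∈ X
      · exact key u v hadj hu
      · by_cases hv : v ∈ X
        · have h7 := key v u hadj.symm hv
          linarith
        · have h8 : x₀ u ≤ (if u ∈ X then x₀ u - ε else if u ∈ B then x₀ u + ε else x₀ u) := by
            rw [if_neg hu]
            by_cases h : u ∈ B
            · rw [if_pos h]; linarith
            · rw [if_neg h]
          have h9 : x₀ v ≤ (if v ∈ X then x₀ v - ε else if v ∈ B then x₀ v + ε else x₀ v) := by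
            rw [if_neg hv]
            by_cases h : v ∈ B
            · rw [if_pos h]; linarith
            · rw [if_neg h]
          have h10 := hx₀.2 hadj
          linarith
  obtain ⟨g, hginj, hgmem⟩ :=
    (Finset.all_card_le_biUnion_card_iff_exists_injective
      (fun v : {v // v ∈ Istar} => Ah.filter (G.Adj v.1))).mp hHall2
  -- build the two matchings
  have hA1A0 : ∀ v ∈ A1, v ∉ A0 := by
    intro v hv hv0
    have h1 := (hmemA1 v).mp hv
    have h2 := (hmemA0 v).mp hv0
    linarith
  obtain ⟨M1, hM1, hM1card, hM1sup⟩ := matching_of_inj G A1 A0 hA1A0 f hfinj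
    (fun v => (mem_filter.mp (hfmem v)).2) (fun v => (mem_filter.mp (hfmem v)).1)
  have hIT : ∀ v ∈ Istar, v ∉ Ah ∩ T := fun v hv hvc =>
    (mem_sdiff.mp hv).2 (mem_inter.mp hvc).2
  have hgQ : ∀ v : {v // v ∈ Istar}, g v ∈ Ah ∩ T := by
    intro v
    have hadj := (mem_filter.mp (hgmem v)).2
    have hAh := (mem_filter.mp (hgmem v)).1
    rcases hT hadj with h | h
    · exact absurd h (mem_sdiff.mp v.2).2
    · exact mem_inter.mpr ⟨hAh, h⟩
  obtain ⟨M2, hM2, hM2card, hM2sup⟩ := matching_of_inj G Istar (Ah ∩ T) hIT g hginj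
    (fun v => (mem_filter.mp (hgmem v)).2) hgQ
  have hsupdisj : ∀ e ∈ M1, ∀ e' ∈ M2, ∀ v : V, v ∈ e → v ∉ e' := by
    intro e he e' he' v hv hv'
    have h1 := hM1sup e he v hv
    have h2 := hM2sup e' he' v hv'
    have hvh : x₀ v = 1/2 := by
      rcases mem_union.mp h2 with h | h
      · exact (hmemAh v).mp (mem_sdiff.mp h).1
      · exact (hmemAh v).mp (mem_inter.mp h).1
    rcases mem_union.mp h1 with h | h
    · have := (hmemA1 v).mp h; linarith
    · have := (hmemA0 v).mp h; linarith
  obtain ⟨hMu, hMucard⟩ := matching_union G hM1 hM2 hsupdisj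
  have hMM : A1.card + Istar.card ≤ MMnum G := by
    have h := le_MMnum G hMu
    rwa [hMucard, hM1card, hM2card] at h
  -- the cover is large
  have hcov : A1.attach.card ≤ (T \ Ah).card := by
    apply Finset.card_le_card_of_injOn (fun a : {v // v ∈ A1} => if a.1 ∈ T then a.1 else f a)
    · intro a _
      simp only [Finset.mem_coe]
      by_cases hat : a.1 ∈ T
      · rw [if_pos hat]
        refine mem_sdiff.mpr ⟨hat, fun hAh => ?_⟩
        have h1 := (hmemA1 a.1).mp a.2
        have h2 := (hmemAh a.1).mp hAh
        linarith
      · rw [if_neg hat]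
        have hadj := (mem_filter.mp (hfmem a)).2
        have hfA0 := (mem_filter.mp (hfmem a)).1
        rcases hT hadj with h | h
        · exact absurd h hat
        · refine mem_sdiff.mpr ⟨h, fun hAh => ?_⟩
          have h1 := (hmemA0 _).mp hfA0
          have h2 := (hmemAh _).mp hAh
          linarith
    · intro a _ b _ hab
      simp only [] at hab
      by_cases hat : a.1 ∈ T <;> by_cases hbt : b.1 ∈ T
      · rw [if_pos hat, if_pos hbt] at hab
        exact Subtype.ext hab
      · rw [if_pos hat, if_neg hbt] at hab
        exfalso
        have hfb := (hmemA0 _).mp (mem_filter.mp (hfmem b)).1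
        rw [← hab] at hfb
        have := (hmemA1 a.1).mp a.2
        linarith
      · rw [if_neg hat, if_pos hbt] at hab
        exfalso
        have hfa := (hmemA0 _).mp (mem_filter.mp (hfmem a)).1
        rw [hab] at hfa
        have := (hmemA1 b.1).mp b.2
        linarith
      · rw [if_neg hat, if_neg hbt] at hab
        exact hfinj hab
  rw [Finset.card_attach] at hcov
  -- the rounded solution bounds LPopt
  have hLP : LPopt G ≤ (A1.card : ℝ) + (Ah.card : ℝ) / 2 := by
    have hyfvc : IsFVC G
        (fun v => if 1/2 < x₀ v then (1:ℝ) else if x₀ v = 1/2 then 1/2 else 0) := by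
      constructor
      · intro v
        simp only []
        split_ifs <;> norm_num
      · intro u v hadj
        have hfeas := hx₀.2 hadj
        simp only []
        by_cases h1 : 1/2 < x₀ u
        · rw [if_pos h1]
          have : (0:ℝ) ≤ if 1/2 < x₀ v then (1:ℝ) else if x₀ v = 1/2 then 1/2 else 0 := by
            split_ifs <;> norm_num
          linarith
        · by_cases h2 : 1/2 < x₀ v
          · rw [if_pos h2]
            have : (0:ℝ) ≤ if 1/2 < x₀ u then (1:ℝ) else if x₀ u = 1/2 then 1/2 else 0 := by
              split_ifs <;> norm_num
            linarith
          · have hu2 : x₀ u = 1/2 := by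
              have := not_lt.mp h1
              have := not_lt.mp h2
              linarith
            have hv2 : x₀ v = 1/2 := by
              have := not_lt.mp h1
              have := not_lt.mp h2
              linarith
            rw [if_neg h1, if_pos hu2, if_neg h2, if_pos hv2]
            norm_num
    have hle := LPopt_le G hyfvc
    have hweq : fvcWeight
        (fun v => if 1/2 < x₀ v then (1:ℝ) else if x₀ v = 1/2 then 1/2 else 0)
        = (A1.card : ℝ) + (Ah.card : ℝ) / 2 := by
      unfold fvcWeight
      have hpt : ∀ v : V, (if 1/2 < x₀ v then (1:ℝ) else if x₀ v = 1/2 then 1/2 else 0)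
          = (if v ∈ A1 then (1:ℝ) else 0) + (if v ∈ Ah then (1/2:ℝ) else 0) := by
        intro v
        by_cases h1 : 1/2 < x₀ v
        · rw [if_pos h1, if_pos ((hmemA1 v).mpr h1),
            if_neg (fun h => by have := (hmemAh v).mp h; linarith)]
          norm_num
        · rw [if_neg h1, if_neg (fun h => h1 ((hmemA1 v).mp h))]
          by_cases h2 : x₀ v = 1/2
          · rw [if_pos h2, if_pos ((hmemAh v).mpr h2)]
            norm_num
          · rw [if_neg h2, if_neg (fun h => h2 ((hmemAh v).mp h))]
            norm_num
      simp only [hpt, Finset.sum_add_distrib]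
      rw [Finset.sum_ite_mem, Finset.sum_ite_mem, Finset.univ_inter, Finset.univ_inter,
        Finset.sum_const, Finset.sum_const]
      simp only [nsmul_eq_mul]
      ring
    rw [hweq] at hle
    exact hle
  -- final counting
  have hTsplit : (T ∩ Ah).card + (T \ Ah).card = T.card := Finset.card_inter_add_card_sdiff T Ah
  have hAhsplit : (Ah ∩ T).card + (Ah \ T).card = Ah.card := Finset.card_inter_add_card_sdiff Ah T
  have hcomm : (T ∩ Ah).card = (Ah ∩ T).card := by rw [Finset.inter_comm]
  have hIstar : Istar.card = (Ah \ T).card := rfl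
  have hMMr : (A1.card : ℝ) + ((Ah \ T).card : ℝ) ≤ (MMnum G : ℝ) := by
    rw [hIstar] at hMM
    exact_mod_cast hMM
  have hcovr : (A1.card : ℝ) ≤ ((T \ Ah).card : ℝ) := by exact_mod_cast hcov
  have hTr : ((T ∩ Ah).card : ℝ) + ((T \ Ah).card : ℝ) = ((VCnum G : ℕ) : ℝ) := by
    rw [← hTcard]
    exact_mod_cast hTsplit
  have hAhr : ((Ah ∩ T).card : ℝ) + ((Ah \ T).card : ℝ) = (Ah.card : ℝ) := by
    exact_mod_cast hAhsplit
  have hcommr : ((T ∩ Ah).card : ℝ) = ((Ah ∩ T).card : ℝ) := by exact_mod_cast hcomm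
  linarith
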